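/- Let (M,g) be a Riemannian manifold, V a finite-dimensional real vector space with nondegenerate symmetric bilinear form, and Ω a V-valued one-form on M satisfying ⟨Ω(X),Ω(Y)⟩ = g(X,Y) for all tangent vectors X, Y. Then the condition ⟨dΩ(X,Y),Ω(Z)⟩ = 0 for all X,Y,Z holds if and only if the tangential part of the flat connection D on the trivial bundle M × V, transported to TM via Ω, equals the Levi-Civita connection of g. -/

import Mathlib

/-- (Proposition: equivalent definition of virtual immersion, in a
chart model where the manifold `M` is a finite-dimensional real vector space `E`,
vector fields are smooth maps `E → E`, the flat connection `D` on the trivial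
bundle `M × V` is `D_X s = fderiv s (X ·)`, and `[X,Y] = D_X Y − D_Y X`.)
Let `g` be a Riemannian metric, `V` pseudo-Euclidean with form `B`, and `Ω` a
`V`-valued one-form with `B(Ω X, Ω Y) = g(X,Y)`. Then `B(dΩ(X,Y), Ω Z) = 0` for
all `X,Y,Z` holds iff the tangential part of `D`, transported via `Ω`, is the
Levi-Civita connection `∇` of `g`, i.e. `B(D_X Ω(Y), Ω z) = g(∇_X Y, z)`. -/
theorem stmt_12 {E V : Type*}
    [NormedAddCommGroup E] [NormedSpace ℝ E] [FiniteDimensional ℝ E]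
    [NormedAddCommGroup V] [NormedSpace ℝ V] [FiniteDimensional ℝ V]
    -- the nondegenerate symmetric bilinear form on V
    (B : V →ₗ[ℝ] V →ₗ[ℝ] ℝ) (hBsymm : ∀ u v : V, B u v = B v u)
    (hBnd : ∀ u : V, (∀ v : V, B u v = 0) → u = 0)
    -- the Riemannian metric g
    (g : E → E →ₗ[ℝ] E →ₗ[ℝ] ℝ) (hgsymm : ∀ p (v w : E), g p v w = g p w v)
    (hgpos : ∀ p (v : E), v ≠ 0 → 0 < g p v v)
    -- the V-valued one-form Ω, satisfying condition (a)
    (Ω : E → (E →L[ℝ] V)) (hΩ : ContDiff ℝ (⊤ : ℕ∞) Ω)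
    (ha : ∀ p (v w : E), B (Ω p v) (Ω p w) = g p v w)
    -- the Levi-Civita connection ∇ of g: torsion-free and metric
    (nabla : (E → E) → (E → E) → (E → E))
    (htf : ∀ X Y : E → E, ContDiff ℝ (⊤ : ℕ∞) X → ContDiff ℝ (⊤ : ℕ∞) Y →
      ∀ p, nabla X Y p - nabla Y X p = fderiv ℝ Y p (X p) - fderiv ℝ X p (Y p))
    (hmetric : ∀ X Y Z : E → E, ContDiff ℝ (⊤ : ℕ∞) X → ContDiff ℝ (⊤ : ℕ∞) Y →
      ContDiff ℝ (⊤ : ℕ∞) Z → ∀ p,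
      fderiv ℝ (fun q => g q (Y q) (Z q)) p (X p)
        = g p (nabla X Y p) (Z p) + g p (Y p) (nabla X Z p)) :
    -- condition (b): ⟨dΩ(X,Y), Ω(Z)⟩ = 0 ...
    (∀ X Y : E → E, ContDiff ℝ (⊤ : ℕ∞) X → ContDiff ℝ (⊤ : ℕ∞) Y → ∀ p (z : E),
        B (fderiv ℝ (fun q => Ω q (Y q)) p (X p)
            - fderiv ℝ (fun q => Ω q (X q)) p (Y p)
            - Ω p (fderiv ℝ Y p (X p) - fderiv ℝ X p (Y p))) (Ω p z) = 0)
    -- ... iff the tangential part of the flat connection D is ∇: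
    ↔ (∀ X Y : E → E, ContDiff ℝ (⊤ : ℕ∞) X → ContDiff ℝ (⊤ : ℕ∞) Y → ∀ p (z : E),
        B (fderiv ℝ (fun q => Ω q (Y q)) p (X p)) (Ω p z) = g p (nabla X Y p) z) := by
  classical
  -- continuous version of B
  let B₁ : V →ₗ[ℝ] (V →L[ℝ] ℝ) :=
    { toFun := fun u => LinearMap.toContinuousLinearMap (B u)
      map_add' := by intro u v; ext w; simp
      map_smul' := by intro c u; ext w; simp }
  let Bc : V →L[ℝ] V →L[ℝ] ℝ := LinearMap.toContinuousLinearMap B₁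
  have hBc : ∀ u v, Bc u v = B u v := fun u v => rfl
  -- metric compatibility of the flat connection
  have key : ∀ (Y Z : E → E), ContDiff ℝ (⊤ : ℕ∞) Y → ContDiff ℝ (⊤ : ℕ∞) Z →
      ∀ p (v : E), fderiv ℝ (fun q => g q (Y q) (Z q)) p v
        = B (fderiv ℝ (fun q => Ω q (Y q)) p v) (Ω p (Z p))
          + B (Ω p (Y p)) (fderiv ℝ (fun q => Ω q (Z q)) p v) := by
    intro Y Z hY hZ p v
    have hfY : ContDiff ℝ (⊤ : ℕ∞) (fun q => Ω q (Y q)) := hΩ.clm_apply hY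
    have hfZ : ContDiff ℝ (⊤ : ℕ∞) (fun q => Ω q (Z q)) := hΩ.clm_apply hZ
    have h1 : HasFDerivAt (fun q => Ω q (Y q))
        (fderiv ℝ (fun q => Ω q (Y q)) p) p :=
      (hfY.differentiable (by simp) p).hasFDerivAt
    have h2 : HasFDerivAt (fun q => Ω q (Z q))
        (fderiv ℝ (fun q => Ω q (Z q)) p) p :=
      (hfZ.differentiable (by simp) p).hasFDerivAt
    have hc : HasFDerivAt (fun q => Bc (Ω q (Y q)))
        (Bc.comp (fderiv ℝ (fun q => Ω q (Y q)) p)) p :=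
      Bc.hasFDerivAt.comp p h1
    have h3 := hc.clm_apply h2
    have heq : (fun q => g q (Y q) (Z q)) = fun q => Bc (Ω q (Y q)) (Ω q (Z q)) := by
      funext q; rw [hBc, ha]
    rw [heq, h3.fderiv]
    simp [hBc]
    ring
  -- the difference tensor
  set F : (E → E) → (E → E) → E → E → ℝ :=
    fun X Y p z => B (fderiv ℝ (fun q => Ω q (Y q)) p (X p)) (Ω p z)
      - g p (nabla X Y p) z with hF
  constructor
  · -- (b) → tangential part is ∇
    intro hb
    -- symmetry of F in X, Y, from (b) and torsion-freeness
    have hsym : ∀ X Y : E → E, ContDiff ℝ (⊤ : ℕ∞) X → ContDiff ℝ (⊤ : ℕ∞) Y →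
        ∀ p z, F X Y p z = F Y X p z := by
      intro X Y hX hY p z
      have hb' := hb X Y hX hY p z
      simp only [map_sub, LinearMap.sub_apply, ha] at hb'
      have h3 := congrArg (fun w => g p w z) (htf X Y hX hY p)
      simp only [map_sub, LinearMap.sub_apply] at h3
      simp only [hF]
      linarith
    -- antisymmetry of F in Y, z-slot, from metric compatibility
    have hanti : ∀ X Y Z : E → E, ContDiff ℝ (⊤ : ℕ∞) X → ContDiff ℝ (⊤ : ℕ∞) Y →
        ContDiff ℝ (⊤ : ℕ∞) Z → ∀ p, F X Y p (Z p) = - F X Z p (Y p) := by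
      intro X Y Z hX hY hZ p
      have k := key Y Z hY hZ p (X p)
      have m := hmetric X Y Z hX hY hZ p
      have hb1 : B (Ω p (Y p)) (fderiv ℝ (fun q => Ω q (Z q)) p (X p))
          = B (fderiv ℝ (fun q => Ω q (Z q)) p (X p)) (Ω p (Y p)) := hBsymm _ _
      have hg1 : g p (Y p) (nabla X Z p) = g p (nabla X Z p) (Y p) := hgsymm _ _ _
      simp only [hF]
      linarith
    have hzero : ∀ X Y Z : E → E, ContDiff ℝ (⊤ : ℕ∞) X → ContDiff ℝ (⊤ : ℕ∞) Y →
        ContDiff ℝ (⊤ : ℕ∞) Z → ∀ p, F X Y p (Z p) = 0 := by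
      intro X Y Z hX hY hZ p
      have e1 : F X Y p (Z p) = F Y X p (Z p) := hsym X Y hX hY p (Z p)
      have e2 : F Y X p (Z p) = - F Y Z p (X p) := hanti Y X Z hY hX hZ p
      have e3 : F Y Z p (X p) = F Z Y p (X p) := hsym Y Z hY hZ p (X p)
      have e4 : F Z Y p (X p) = - F Z X p (Y p) := hanti Z Y X hZ hY hX p
      have e5 : F Z X p (Y p) = F X Z p (Y p) := hsym Z X hZ hX p (Y p)
      have e6 : F X Z p (Y p) = - F X Y p (Z p) := hanti X Z Y hX hZ hY p
      linarith
    intro X Y hX hY p z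
    have := hzero X Y (fun _ => z) hX hY contDiff_const p
    simp only [hF] at this
    linarith
  · -- converse
    intro hc X Y hX hY p z
    have h1 := hc X Y hX hY p z
    have h2 := hc Y X hY hX p z
    have h3 := congrArg (fun w => g p w z) (htf X Y hX hY p)
    simp only [map_sub, LinearMap.sub_apply] at h3 ⊢
    simp only [ha]
    linarith
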